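/- Let c ∈ ℝ, let f₁, f₂ : [0,1] → [0,1] be Lebesgue measurable functions such that the preimage under each f_n of every Lebesgue-null set is Lebesgue null, and define P by Ph = −(1/2)(h∘f₁) − (1/2)(h∘f₂). Then, with g the constant function c: (i) the constant function c/2 belongs to L¹([0,1]) and satisfies φ = Pφ + g; (ii) P^k g equals the constant function (−1)^k c for every k ∈ ℕ, so that Σ_{k=0}^m P^k g = (1/2)(1+(−1)^m) c for every m ∈ ℕ; (iii) the series Σ_{k=0}^∞ P^k g converges in L¹([0,1]) if and only if c = 0. -/

import Mathlib

open MeasureTheory Filter Set Topology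

noncomputable abbrev μ01 : MeasureTheory.Measure ℝ := MeasureTheory.volume.restrict (Set.Icc 0 1)

/-- The constant function with value `c`, as an element of `L¹([0,1])`. -/
noncomputable def constL1 (c : ℝ) : Lp ℝ 1 μ01 :=
  (MeasureTheory.memLp_const c).toLp fun _ : ℝ => c

/-- The operator `Ph = -(1/2)(h ∘ f₁) - (1/2)(h ∘ f₂)`, acting on functions. -/
noncomputable def Pfun2 (f₁ f₂ : ℝ → ℝ) (h : ℝ → ℝ) : ℝ → ℝ :=
  fun x => -(1 / 2) * h (f₁ x) - (1 / 2) * h (f₂ x)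

lemma constL1_add (a b : ℝ) : constL1 a + constL1 b = constL1 (a + b) := by
  unfold constL1
  rw [← MemLp.toLp_add]
  rfl

lemma μ01_ne_zero : μ01 ≠ 0 := by
  intro h
  have : μ01 (Set.Icc (0:ℝ) 1) = 0 := by rw [h]; rfl
  rw [Measure.restrict_apply_self, Real.volume_Icc] at this
  norm_num at this

lemma norm_constL1 (a : ℝ) : ‖constL1 a‖ = |a| := by
  unfold constL1
  rw [Lp.norm_toLp, eLpNorm_const _ (by norm_num) μ01_ne_zero]
  simp [μ01, Real.volume_Icc]

lemma constL1_zero : constL1 0 = 0 := by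
  unfold constL1
  exact MemLp.toLp_zero _

theorem stmt3 (c : ℝ) (f₁ f₂ : ℝ → ℝ)
    (hmaps₁ : MapsTo f₁ (Icc 0 1) (Icc 0 1)) (hmaps₂ : MapsTo f₂ (Icc 0 1) (Icc 0 1))
    (hmeas₁ : Measurable f₁) (hmeas₂ : Measurable f₂)
    (hnull₁ : ∀ A : Set ℝ, volume A = 0 → μ01 (f₁ ⁻¹' A) = 0)
    (hnull₂ : ∀ A : Set ℝ, volume A = 0 → μ01 (f₂ ⁻¹' A) = 0) :
    -- (i) the constant function c/2 belongs to L¹([0,1]) and satisfies φ = Pφ + g with g ≡ c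
    (MemLp (fun _ : ℝ => c / 2) 1 μ01 ∧
      (fun _ : ℝ => c / 2) = fun x => Pfun2 f₁ f₂ (fun _ => c / 2) x + c) ∧
    -- (ii) P^k g is the constant function (-1)^k c, and the partial sums are as stated
    (∀ k : ℕ, (Pfun2 f₁ f₂)^[k] (fun _ => c) = fun _ : ℝ => (-1 : ℝ) ^ k * c) ∧
    (∀ m : ℕ, (∑ k ∈ Finset.range (m + 1), (Pfun2 f₁ f₂)^[k] (fun _ => c)) =
      fun _ : ℝ => (1 / 2) * (1 + (-1 : ℝ) ^ m) * c) ∧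
    -- (iii) the series Σ P^k g converges in L¹([0,1]) iff c = 0
    ((∃ s : Lp ℝ 1 μ01,
        Tendsto (fun m => ∑ k ∈ Finset.range (m + 1), constL1 ((-1 : ℝ) ^ k * c)) atTop (𝓝 s)) ↔
      c = 0) := by
  have hiter : ∀ k : ℕ, (Pfun2 f₁ f₂)^[k] (fun _ => c) = fun _ : ℝ => (-1 : ℝ) ^ k * c := by
    intro k
    induction k with
    | zero => simp
    | succ n ih =>
      rw [Function.iterate_succ_apply', ih]
      funext x
      simp only [Pfun2, pow_succ]
      ring
  refine ⟨⟨memLp_const _, ?_⟩, hiter, ?_, ?_⟩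
  · funext x
    simp only [Pfun2]
    ring
  · intro m
    funext x
    rw [Finset.sum_apply]
    have : ∀ k ∈ Finset.range (m + 1),
        (Pfun2 f₁ f₂)^[k] (fun _ => c) x = (-1 : ℝ) ^ k * c := by
      intro k _
      rw [hiter k]
    rw [Finset.sum_congr rfl this, ← Finset.sum_mul,
      geom_sum_eq (by norm_num : (-1 : ℝ) ≠ 1)]
    rw [pow_succ]
    ring
  · constructor
    · rintro ⟨s, hs⟩
      by_contra hc
      have hterm : Tendsto (fun m : ℕ =>
          (∑ k ∈ Finset.range (m + 1 + 1), constL1 ((-1 : ℝ) ^ k * c)) -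
          (∑ k ∈ Finset.range (m + 1), constL1 ((-1 : ℝ) ^ k * c))) atTop (𝓝 (s - s)) :=
        ((hs.comp (tendsto_add_atTop_nat 1)).sub hs)
      rw [sub_self] at hterm
      have heq : ∀ m : ℕ,
          (∑ k ∈ Finset.range (m + 1 + 1), constL1 ((-1 : ℝ) ^ k * c)) -
          (∑ k ∈ Finset.range (m + 1), constL1 ((-1 : ℝ) ^ k * c)) =
          constL1 ((-1 : ℝ) ^ (m + 1) * c) := by
        intro m
        rw [Finset.sum_range_succ]
        abel
      have hnorm : Tendsto (fun m : ℕ => ‖constL1 ((-1 : ℝ) ^ (m + 1) * c)‖) atTop (𝓝 0) := by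
        have := hterm.norm
        simp only [norm_zero] at this
        simpa only [heq] using this
      have hval : ∀ m : ℕ, ‖constL1 ((-1 : ℝ) ^ (m + 1) * c)‖ = |c| := by
        intro m
        rw [norm_constL1, abs_mul, abs_pow, abs_neg, abs_one, one_pow, one_mul]
      simp only [hval] at hnorm
      have : |c| = 0 := tendsto_nhds_unique tendsto_const_nhds hnorm
      exact hc (abs_eq_zero.mp this)
    · intro hc
      subst hc
      refine ⟨0, ?_⟩
      have : ∀ m : ℕ, (∑ k ∈ Finset.range (m + 1), constL1 ((-1 : ℝ) ^ k * 0)) = 0 := by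
        intro m
        simp [mul_zero, constL1_zero]
      simpa only [this] using tendsto_const_nhds
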